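/- arXiv:1206.1277 — 5 statements merged into one kernel-verified Lean document; each statement's English description precedes it below -/
import Mathlib

section
/- Let f : X → Y be continuous, g : Y → X continuous, and G : Y × I → Y a homotopy from f ∘ g to the identity of Y (G(y,0) = f(g(y)), G(y,1) = y). Then the map H₂ : M_f × I → M_f defined by ([x,t],s) ↦ [G(f(x),1-s)] and ([y],s) ↦ [G(y,1-s)] is well defined and continuous, and is a homotopy from the retraction r ([x,t] ↦ [x,0], [y] ↦ [y]) to the map h given by [x,t] ↦ [g(f(x)),0], [y] ↦ [g(y),0]. -/
open unitInterval

/-- The relation generating the mapping cylinder identification `(x,0) ∼ f x`. -/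
def cylRel {X Y : Type*} (f : X → Y) : (X × I) ⊕ Y → (X × I) ⊕ Y → Prop :=
  fun a b => ∃ x : X, a = Sum.inl (x, 0) ∧ b = Sum.inr (f x)

/-- The mapping cylinder of `f`, as a quotient of `(X × I) ⊕ Y`. -/
abbrev Cyl {X Y : Type*} (f : X → Y) : Type _ := Quot (cylRel f)

/-- The quotient map onto the mapping cylinder. -/
def cylQ {X Y : Type*} (f : X → Y) : (X × I) ⊕ Y → Cyl f := Quot.mk _

/-- given a homotopy `G` from `f ∘ g` to `1_Y`, the map
`H₂ : M_f × I → M_f`, `([x,t],s) ↦ [G(f x, 1-s)]`, `([y],s) ↦ [G(y, 1-s)]`,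
is well defined and continuous, and is a homotopy from the retraction `r`
(`[x,t] ↦ [x,0]`, `[y] ↦ [y]`) to the map `h` (`[x,t] ↦ [g(f x),0]`,
`[y] ↦ [g y, 0]`). -/
theorem H2_homotopy {X Y : Type*} [TopologicalSpace X] [TopologicalSpace Y]
    (f : X → Y) (g : Y → X) (G : Y × I → Y)
    (hf : Continuous f) (hg : Continuous g) (hG : Continuous G)
    (hG0 : ∀ y, G (y, 0) = f (g y)) (hG1 : ∀ y, G (y, 1) = y) :
    ∃ H : C(Cyl f × I, Cyl f),
      (∀ (x : X) (t s : I), H (cylQ f (Sum.inl (x, t)), s) = cylQ f (Sum.inr (G (f x, σ s)))) ∧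
      (∀ (y : Y) (s : I), H (cylQ f (Sum.inr y), s) = cylQ f (Sum.inr (G (y, σ s)))) ∧
      (∀ (x : X) (t : I), H (cylQ f (Sum.inl (x, t)), 0) = cylQ f (Sum.inl (x, 0))) ∧
      (∀ y : Y, H (cylQ f (Sum.inr y), 0) = cylQ f (Sum.inr y)) ∧
      (∀ (x : X) (t : I), H (cylQ f (Sum.inl (x, t)), 1) = cylQ f (Sum.inl (g (f x), 0))) ∧
      (∀ y : Y, H (cylQ f (Sum.inr y), 1) = cylQ f (Sum.inl (g y, 0))) := by
  -- collapse map φ : Cyl f → Y, [x,t] ↦ f x, [y] ↦ y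
  have hφwd : ∀ a b, cylRel f a b →
      Sum.elim (fun p : X × I => f p.1) (id : Y → Y) a
        = Sum.elim (fun p : X × I => f p.1) (id : Y → Y) b := by
    rintro a b ⟨x, rfl, rfl⟩; rfl
  set φ : Cyl f → Y := Quot.lift _ hφwd with hφ
  have hφc : Continuous φ := by
    exact continuous_quot_lift hφwd (continuous_sumElim.mpr ⟨hf.comp continuous_fst, continuous_id⟩)
  have hφinl : ∀ (x : X) (t : I), φ (cylQ f (Sum.inl (x, t))) = f x := fun _ _ => rfl
  have hφinr : ∀ y : Y, φ (cylQ f (Sum.inr y)) = y := fun _ => rfl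
  refine ⟨⟨fun p => cylQ f (Sum.inr (G (φ p.1, σ p.2))), ?_⟩, ?_, ?_, ?_, ?_, ?_, ?_⟩
  · exact (continuous_quot_mk.comp continuous_inr).comp
      (hG.comp ((hφc.comp continuous_fst).prodMk
        (continuous_symm.comp continuous_snd)))
  · intro x t s; rfl
  · intro y s; rfl
  · intro x t
    show cylQ f (Sum.inr (G (f x, σ 0))) = _
    rw [unitInterval.symm_zero, hG1]
    exact (Quot.sound ⟨x, rfl, rfl⟩).symm
  · intro y
    show cylQ f (Sum.inr (G (y, σ 0))) = _
    rw [unitInterval.symm_zero, hG1]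
  · intro x t
    show cylQ f (Sum.inr (G (f x, σ 1))) = _
    rw [unitInterval.symm_one, hG0]
    exact (Quot.sound ⟨g (f x), rfl, rfl⟩).symm
  · intro y
    show cylQ f (Sum.inr (G (y, σ 1))) = _
    rw [unitInterval.symm_one, hG0]
    exact (Quot.sound ⟨g y, rfl, rfl⟩).symm
end

section
/- Let f : X → Y be continuous, g : Y → X continuous, and F : X × I → X a homotopy from g ∘ f to the identity of X. Then the map H₃ : M_f × I → M_f defined by ([x,t],s) ↦ [F(x,st), s] and ([y],s) ↦ [g(y), s] is well defined and continuous, and is a homotopy from the map h ([x,t] ↦ [g(f(x)),0], [y] ↦ [g(y),0]) to the retraction r' given by [x,t] ↦ [F(x,t),1], [y] ↦ [g(y),1]. -/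
open unitInterval

/-- given a homotopy `F` from `g ∘ f` to `1_X`, the map
`H₃ : M_f × I → M_f`, `([x,t],s) ↦ [F(x, st), s]`, `([y],s) ↦ [g y, s]`,
is well defined and continuous, and is a homotopy from the map `h`
(`[x,t] ↦ [g(f x),0]`, `[y] ↦ [g y,0]`) to the retraction `r'`
(`[x,t] ↦ [F(x,t),1]`, `[y] ↦ [g y,1]`). -/
theorem H3_homotopy {X Y : Type*} [TopologicalSpace X] [TopologicalSpace Y]
    (f : X → Y) (g : Y → X) (F : X × I → X)
    (hf : Continuous f) (hg : Continuous g) (hF : Continuous F)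
    (hF0 : ∀ x, F (x, 0) = g (f x)) (hF1 : ∀ x, F (x, 1) = x) :
    ∃ H : C(Cyl f × I, Cyl f),
      (∀ (x : X) (t s : I), H (cylQ f (Sum.inl (x, t)), s) = cylQ f (Sum.inl (F (x, s * t), s))) ∧
      (∀ (y : Y) (s : I), H (cylQ f (Sum.inr y), s) = cylQ f (Sum.inl (g y, s))) ∧
      (∀ (x : X) (t : I), H (cylQ f (Sum.inl (x, t)), 0) = cylQ f (Sum.inl (g (f x), 0))) ∧
      (∀ y : Y, H (cylQ f (Sum.inr y), 0) = cylQ f (Sum.inl (g y, 0))) ∧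
      (∀ (x : X) (t : I), H (cylQ f (Sum.inl (x, t)), 1) = cylQ f (Sum.inl (F (x, t), 1))) ∧
      (∀ y : Y, H (cylQ f (Sum.inr y), 1) = cylQ f (Sum.inl (g y, 1))) := by
  classical
  let body : ((X × I) ⊕ Y) → I → Cyl f := fun a s =>
    Sum.elim (fun p : X × I => cylQ f (Sum.inl (F (p.1, s * p.2), s)))
      (fun y : Y => cylQ f (Sum.inl (g y, s))) a
  have wd : ∀ s : I, ∀ a b, cylRel f a b → body a s = body b s := by
    rintro s a b ⟨x, rfl, rfl⟩
    simp only [body, Sum.elim_inl, Sum.elim_inr]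
    have : s * (0 : I) = 0 := by ext; simp
    rw [this, hF0]
  let Hfun : Cyl f × I → Cyl f := fun p => Quot.lift (fun a => body a p.2) (wd p.2) p.1
  have hcont : Continuous Hfun := by
    apply (isQuotientMap_quot_mk (r := cylRel f)).continuous_lift_prod_left
    have : (fun p : ((X × I) ⊕ Y) × I => Hfun (Quot.mk _ p.1, p.2)) =
        fun p => body p.1 p.2 := rfl
    rw [this]
    have heq : (fun p : ((X × I) ⊕ Y) × I => body p.1 p.2) =
        (Sum.elim (fun p : (X × I) × I => cylQ f (Sum.inl (F (p.1.1, p.2 * p.1.2), p.2)))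
          (fun p : Y × I => cylQ f (Sum.inl (g p.1, p.2)))) ∘
        (Homeomorph.sumProdDistrib : ((X × I) ⊕ Y) × I ≃ₜ _) := by
      funext p; rcases p with ⟨a | y, s⟩ <;> rfl
    rw [heq]
    refine Continuous.comp ?_ (Homeomorph.continuous _)
    have hmul : Continuous (fun p : I × I => p.1 * p.2) :=
      Continuous.subtype_mk (by continuity :
        Continuous fun p : I × I => (p.1 : ℝ) * (p.2 : ℝ)) _
    refine Continuous.sumElim ?_ ?_
    · exact (continuous_quot_mk.comp continuous_inl).comp
        ((hF.comp ((continuous_fst.comp continuous_fst).prodMk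
          (hmul.comp (continuous_snd.prodMk (continuous_snd.comp continuous_fst))))).prodMk
          continuous_snd)
    · exact (continuous_quot_mk.comp continuous_inl).comp
        ((hg.comp continuous_fst).prodMk continuous_snd)
  refine ⟨⟨Hfun, hcont⟩, ?_, ?_, ?_, ?_, ?_, ?_⟩
  · intro x t s; rfl
  · intro y s; rfl
  · intro x t
    show cylQ f (Sum.inl (F (x, (0:I) * t), 0)) = _
    rw [zero_mul, hF0]
  · intro y; rfl
  · intro x t
    show cylQ f (Sum.inl (F (x, (1:I) * t), 1)) = _
    rw [one_mul]
  · intro y; rfl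
end

section
/- If f : X → Y is a homotopy equivalence, then the top X̃ = q(X × {1}) of the mapping cylinder M_f is a deformation retract of M_f: there is a homotopy H : M_f × I → M_f with H(p,0) = p for all p and H(p,1) ∈ X̃ for all p, and H(p,1) = p for p ∈ X̃ (deformation retraction, not necessarily strong). -/
open unitInterval

namespace CylAux

open ContinuousMap Topology

/-- `s * (1 - t)` inside the unit interval. -/
def shr (s t : I) : I :=
  ⟨s.1 * (1 - t.1), by constructor <;> nlinarith [s.2.1, s.2.2, t.2.1, t.2.2]⟩

lemma continuous_shr : Continuous fun st : I × I => shr st.1 st.2 := by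
  apply Continuous.subtype_mk
  fun_prop

@[simp] lemma shr_zero_right (s : I) : shr s 0 = s := Subtype.ext (by simp [shr])

@[simp] lemma shr_one_right (s : I) : shr s 1 = 0 := Subtype.ext (by simp [shr])

@[simp] lemma shr_zero_left (t : I) : shr 0 t = 0 := Subtype.ext (by simp [shr])

variable {X Y : Type*} [TopologicalSpace X] [TopologicalSpace Y]

omit [TopologicalSpace X] [TopologicalSpace Y] in
lemma cyl_sound (f : X → Y) (x : X) :
    cylQ f (Sum.inl (x, 0)) = cylQ f (Sum.inr (f x)) :=
  Quot.sound ⟨x, rfl, rfl⟩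

/-- Continuity for maps out of `C × (A ⊕ B)`. -/
lemma continuous_prod_sum {A B C Z : Type*} [TopologicalSpace A] [TopologicalSpace B]
    [TopologicalSpace C] [TopologicalSpace Z] {g : C × (A ⊕ B) → Z}
    (h₁ : Continuous fun p : C × A => g (p.1, Sum.inl p.2))
    (h₂ : Continuous fun p : C × B => g (p.1, Sum.inr p.2)) : Continuous g := by
  have h' : Continuous fun p : (A ⊕ B) × C => g (p.2, p.1) := by
    refine Continuous.congr
      (((h₁.comp continuous_swap).sumElim (h₂.comp continuous_swap)).comp
        (Homeomorph.sumProdDistrib (X := A) (Y := B) (Z := C)).continuous) ?_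
    rintro ⟨a | b, c⟩ <;> rfl
  exact (h'.comp continuous_swap).congr fun p => rfl

/-- Continuity for maps out of `I × Cyl f` via the quotient. -/
lemma continuous_cyl_lift {Z : Type*} [TopologicalSpace Z] (f : X → Y)
    {g : I × Cyl f → Z}
    (h : Continuous fun p : I × ((X × I) ⊕ Y) => g (p.1, cylQ f p.2)) : Continuous g :=
  (isQuotientMap_quot_mk (r := cylRel f)).continuous_lift_prod_right h

/-- The collapse `M_f → Y`. -/
def cmap (f : X → Y) (hf : Continuous f) : C(Cyl f, Y) where
  toFun := Quot.lift (Sum.elim (fun p : X × I => f p.1) id)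
    (by rintro a b ⟨x, rfl, rfl⟩; rfl)
  continuous_toFun := continuous_quot_lift _
    ((hf.comp continuous_fst).sumElim continuous_id)

/-- The bottom inclusion `Y → M_f`. -/
def jmap (f : X → Y) : C(Y, Cyl f) :=
  ⟨fun y => cylQ f (Sum.inr y), continuous_quot_mk.comp continuous_inr⟩

/-- The top inclusion `X → M_f`. -/
def topmap (f : X → Y) : C(X, Cyl f) :=
  ⟨fun x => cylQ f (Sum.inl (x, 1)),
    continuous_quot_mk.comp (continuous_inl.comp (Continuous.prodMk continuous_id
      continuous_const))⟩

variable (f : X → Y) (hf : Continuous f) (g : C(Y, X))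
  (L : (g.comp ⟨f, hf⟩).Homotopy (ContinuousMap.id X))

/-- The retraction `M_f → X`, `(x,s) ↦ L(s,x)`, `y ↦ g y`. -/
def rmap : C(Cyl f, X) where
  toFun := Quot.lift (Sum.elim (fun p : X × I => L (p.2, p.1)) g)
    (by
      rintro a b ⟨x, rfl, rfl⟩
      simpa using L.apply_zero x)
  continuous_toFun := continuous_quot_lift _
    ((L.continuous.comp (Continuous.prodMk continuous_snd continuous_fst)).sumElim
      g.continuous)

/-- Stage 1: slide the cylinder down onto `Y`. -/
def F1 : (ContinuousMap.id (Cyl f)).Homotopy ((jmap f).comp (cmap f hf)) where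
  toFun := fun pt => Quot.liftOn pt.2
    (Sum.elim (fun p : X × I => cylQ f (Sum.inl (p.1, shr p.2 pt.1)))
      (fun y => cylQ f (Sum.inr y)))
    (by
      rintro a b ⟨x, rfl, rfl⟩
      simpa using cyl_sound f x)
  continuous_toFun := by
    refine continuous_cyl_lift f ?_
    refine continuous_prod_sum ?_ ?_
    · exact continuous_quot_mk.comp (continuous_inl.comp
        ((continuous_fst.comp continuous_snd).prodMk
          (continuous_shr.comp ((continuous_snd.comp continuous_snd).prodMk
            continuous_fst))))
    · exact continuous_quot_mk.comp (continuous_inr.comp continuous_snd)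
  map_zero_left := by
    intro p
    induction p using Quot.ind with
    | mk a =>
      rcases a with ⟨x, s⟩ | y
      · show cylQ f (Sum.inl (x, shr s 0)) = cylQ f (Sum.inl (x, s))
        rw [shr_zero_right]
      · rfl
  map_one_left := by
    intro p
    induction p using Quot.ind with
    | mk a =>
      rcases a with ⟨x, s⟩ | y
      · simpa [cylQ, cmap, jmap] using cyl_sound f x
      · rfl

variable (K : ((⟨f, hf⟩ : C(X, Y)).comp g).Homotopy (ContinuousMap.id Y))

/-- Stage 2: move `Y` to `f (g Y)` using `K`. -/
noncomputable def F2 : ((jmap f).comp (cmap f hf)).Homotopy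
    ((jmap f).comp (((⟨f, hf⟩ : C(X, Y)).comp g).comp (cmap f hf))) :=
  (ContinuousMap.Homotopy.comp (ContinuousMap.Homotopy.refl (jmap f))
    (ContinuousMap.Homotopy.comp K.symm (ContinuousMap.Homotopy.refl (cmap f hf)))).cast (by ext p; rfl) rfl

/-- Stage 3: slide `f (g y)` up the cylinder to the top. -/
def F3 : ((jmap f).comp (((⟨f, hf⟩ : C(X, Y)).comp g).comp (cmap f hf))).Homotopy
    ((topmap f).comp (g.comp (cmap f hf))) where
  toFun := fun pt => cylQ f (Sum.inl (g (cmap f hf pt.2), pt.1))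
  continuous_toFun := continuous_quot_mk.comp (continuous_inl.comp
    ((g.continuous.comp ((cmap f hf).continuous.comp continuous_snd)).prodMk
      continuous_fst))
  map_zero_left := fun p => cyl_sound f (g (cmap f hf p))
  map_one_left := fun _ => rfl

/-- The homotopy `r ≃ g ∘ c` inside `X`. -/
def Ghom : (rmap f hf g L).Homotopy (g.comp (cmap f hf)) where
  toFun := fun pt => Quot.liftOn pt.2
    (Sum.elim (fun p : X × I => L (shr p.2 pt.1, p.1)) g)
    (by
      rintro a b ⟨x, rfl, rfl⟩
      simpa using L.apply_zero x)
  continuous_toFun := by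
    refine continuous_cyl_lift f ?_
    refine continuous_prod_sum ?_ ?_
    · exact L.continuous.comp
        ((continuous_shr.comp ((continuous_snd.comp continuous_snd).prodMk
          continuous_fst)).prodMk (continuous_fst.comp continuous_snd))
    · exact g.continuous.comp continuous_snd
  map_zero_left := by
    intro p
    induction p using Quot.ind with
    | mk a =>
      rcases a with ⟨x, s⟩ | y
      · show L (shr s 0, x) = L (s, x)
        rw [shr_zero_right]
      · rfl
  map_one_left := by
    intro p
    induction p using Quot.ind with
    | mk a =>
      rcases a with ⟨x, s⟩ | y
      · show L (shr s 1, x) = g (f x)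
        rw [shr_one_right]
        simpa using L.apply_zero x
      · rfl

/-- Stage 4: correct `g ∘ c` back to the retraction `r` at the top. -/
noncomputable def F4 : ((topmap f).comp (g.comp (cmap f hf))).Homotopy ((topmap f).comp (rmap f hf g L)) :=
  ContinuousMap.Homotopy.comp (ContinuousMap.Homotopy.refl (topmap f)) (Ghom f hf g L).symm

/-- The full homotopy `id ≃ top ∘ r`. -/
noncomputable def Ffull : (ContinuousMap.id (Cyl f)).Homotopy ((topmap f).comp (rmap f hf g L)) :=
  (((F1 f hf).trans (F2 f hf g K)).trans (F3 f hf g)).trans (F4 f hf g L)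

end CylAux

/-- if `f` is a homotopy equivalence, the top `X̃ = q(X × {1})`
of the mapping cylinder is a deformation retract of `M_f` (not necessarily strong). -/
theorem top_deformation_retract {X Y : Type*} [TopologicalSpace X] [TopologicalSpace Y]
    (f : X → Y) (hf : Continuous f)
    (hfe : ∃ g : C(Y, X), ((⟨f, hf⟩ : C(X, Y)).comp g).Homotopic (ContinuousMap.id Y) ∧
      (g.comp ⟨f, hf⟩).Homotopic (ContinuousMap.id X)) :
    ∃ H : C(Cyl f × I, Cyl f),
      (∀ p : Cyl f, H (p, 0) = p) ∧
      (∀ p : Cyl f, H (p, 1) ∈ Set.range fun x : X => cylQ f (Sum.inl (x, 1))) ∧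
      (∀ p ∈ Set.range fun x : X => cylQ f (Sum.inl (x, 1)), H (p, 1) = p) := by
  classical
  obtain ⟨g, hK, hL⟩ := hfe
  let K := hK.some
  let L := hL.some
  let F := CylAux.Ffull f hf g L K
  refine ⟨⟨fun pt => F (pt.2, pt.1),
    F.continuous.comp (continuous_snd.prodMk continuous_fst)⟩, ?_, ?_, ?_⟩
  · intro p
    simpa using F.apply_zero p
  · intro p
    refine ⟨CylAux.rmap f hf g L p, ?_⟩
    exact (F.apply_one p).symm
  · rintro p ⟨x, rfl⟩
    have h1 : F (1, cylQ f (Sum.inl (x, 1)))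
        = CylAux.topmap f (CylAux.rmap f hf g L (cylQ f (Sum.inl (x, 1)))) :=
      F.apply_one _
    have h2 : CylAux.rmap f hf g L (cylQ f (Sum.inl (x, 1))) = x := by
      simpa [CylAux.rmap, cylQ] using L.apply_one x
    show F (1, cylQ f (Sum.inl (x, 1))) = cylQ f (Sum.inl (x, 1))
    rw [h1, h2]
    rfl
end

section
/- If f : X → Y is a homotopy equivalence, then the top X̃ = q(X × {1}) of the mapping cylinder M_f is a strong deformation retract of M_f: there is a homotopy Γ : M_f × I → M_f with Γ(p,0) = p, Γ(p,1) ∈ X̃ for all p ∈ M_f, and Γ(p̃,s) = p̃ for all p̃ ∈ X̃ and all s ∈ I. -/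
open unitInterval

namespace CylSDR

noncomputable section

/-- clamp to [0,1] -/
def cl (r : ℝ) : ℝ := max 0 (min 1 r)

lemma cl_nonneg (r : ℝ) : 0 ≤ cl r := le_max_left _ _
lemma cl_le_one (r : ℝ) : cl r ≤ 1 := max_le zero_le_one (min_le_left _ _)
lemma cl_mem (r : ℝ) : cl r ∈ Set.Icc (0:ℝ) 1 := ⟨cl_nonneg r, cl_le_one r⟩
lemma cl_of_nonpos {r : ℝ} (h : r ≤ 0) : cl r = 0 :=
  max_eq_left ((min_le_right _ _).trans h)
lemma cl_of_ge_one {r : ℝ} (h : 1 ≤ r) : cl r = 1 := by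
  rw [cl, min_eq_left h]; exact max_eq_right zero_le_one
lemma cl_of_mem {r : ℝ} (h0 : 0 ≤ r) (h1 : r ≤ 1) : cl r = r := by
  rw [cl, min_eq_right h1]; exact max_eq_right h0
lemma cl_idem (r : ℝ) : cl (cl r) = cl r := cl_of_mem (cl_nonneg r) (cl_le_one r)
lemma cl_zero : cl 0 = 0 := cl_of_nonpos le_rfl
lemma cl_one : cl 1 = 1 := cl_of_ge_one le_rfl

@[fun_prop] lemma continuous_cl : Continuous cl :=
  continuous_const.max (continuous_const.min continuous_id)

/-- clamp into the unit interval -/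
def clI (r : ℝ) : I := ⟨cl r, cl_mem r⟩

@[fun_prop] lemma continuous_clI : Continuous clI :=
  continuous_cl.subtype_mk _

lemma clI_coe (t : I) : clI ↑t = t := Subtype.ext (cl_of_mem t.2.1 t.2.2)
lemma clI_cl (r : ℝ) : clI (cl r) = clI r := Subtype.ext (cl_idem r)
lemma clI_of_nonpos {r : ℝ} (h : r ≤ 0) : clI r = 0 := Subtype.ext (by simp [clI, cl_of_nonpos h])
lemma clI_of_ge_one {r : ℝ} (h : 1 ≤ r) : clI r = 1 := Subtype.ext (by simp [clI, cl_of_ge_one h])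

/-- All the data of a homotopy equivalence. -/
structure Pack (X Y : Type*) [TopologicalSpace X] [TopologicalSpace Y] where
  f : X → Y
  hf : Continuous f
  g : C(Y, X)
  H : ContinuousMap.Homotopy ((⟨f, hf⟩ : C(X, Y)).comp g) (ContinuousMap.id Y)
  K : ContinuousMap.Homotopy (g.comp (⟨f, hf⟩ : C(X, Y))) (ContinuousMap.id X)

namespace Pack

variable {X Y : Type*} [TopologicalSpace X] [TopologicalSpace Y] (P : Pack X Y)

def yy (y : Y) : Cyl P.f := cylQ P.f (Sum.inr y)
def cc (x : X) (r : ℝ) : Cyl P.f := cylQ P.f (Sum.inl (x, clI r))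
def hY (y : Y) (r : ℝ) : Y := P.H (clI r, y)
def kX (x : X) (r : ℝ) : X := P.K (clI r, x)
def aP (x : X) (r : ℝ) : Y := P.f (P.kX x r)
def bP (x : X) (r : ℝ) : Y := P.hY (P.f x) r

@[fun_prop] lemma cont_yy : Continuous P.yy := continuous_quot_mk.comp continuous_inr
@[fun_prop] lemma cont_cc : Continuous fun p : X × ℝ => P.cc p.1 p.2 :=
  continuous_quot_mk.comp <| continuous_inl.comp <|
    continuous_fst.prodMk (continuous_clI.comp continuous_snd)
@[fun_prop] lemma cont_hY : Continuous fun p : Y × ℝ => P.hY p.1 p.2 :=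
  P.H.continuous.comp ((continuous_clI.comp continuous_snd).prodMk continuous_fst)
@[fun_prop] lemma cont_kX : Continuous fun p : X × ℝ => P.kX p.1 p.2 :=
  P.K.continuous.comp ((continuous_clI.comp continuous_snd).prodMk continuous_fst)
@[fun_prop] lemma cont_aP : Continuous fun p : X × ℝ => P.aP p.1 p.2 := P.hf.comp P.cont_kX
@[fun_prop] lemma cont_bP : Continuous fun p : X × ℝ => P.bP p.1 p.2 :=
  P.cont_hY.comp ((P.hf.comp continuous_fst).prodMk continuous_snd)
@[fun_prop] lemma cont_f : Continuous P.f := P.hf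
@[fun_prop] lemma cont_g : Continuous P.g := P.g.continuous

-- evaluation lemmas
lemma hY_nonpos (y : Y) {r : ℝ} (h : r ≤ 0) : P.hY y r = P.f (P.g y) := by
  rw [hY, clI_of_nonpos h, P.H.apply_zero]; rfl
lemma hY_ge_one (y : Y) {r : ℝ} (h : 1 ≤ r) : P.hY y r = y := by
  rw [hY, clI_of_ge_one h, P.H.apply_one]; rfl
lemma kX_nonpos (x : X) {r : ℝ} (h : r ≤ 0) : P.kX x r = P.g (P.f x) := by
  rw [kX, clI_of_nonpos h, P.K.apply_zero]; rfl
lemma kX_ge_one (x : X) {r : ℝ} (h : 1 ≤ r) : P.kX x r = x := by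
  rw [kX, clI_of_ge_one h, P.K.apply_one]; rfl
lemma aP_nonpos (x : X) {r : ℝ} (h : r ≤ 0) : P.aP x r = P.f (P.g (P.f x)) := by
  rw [aP, P.kX_nonpos x h]
lemma aP_ge_one (x : X) {r : ℝ} (h : 1 ≤ r) : P.aP x r = P.f x := by
  rw [aP, P.kX_ge_one x h]
lemma bP_nonpos (x : X) {r : ℝ} (h : r ≤ 0) : P.bP x r = P.f (P.g (P.f x)) := P.hY_nonpos _ h
lemma bP_ge_one (x : X) {r : ℝ} (h : 1 ≤ r) : P.bP x r = P.f x := P.hY_ge_one _ h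
lemma cc_nonpos (x : X) {r : ℝ} (h : r ≤ 0) : P.cc x r = P.yy (P.f x) := by
  rw [cc, clI_of_nonpos h]; exact Quot.sound ⟨x, rfl, rfl⟩
lemma cc_eq_of_cl {r r' : ℝ} (x : X) (h : cl r = cl r') : P.cc x r = P.cc x r' := by
  have h' : clI r = clI r' := Subtype.ext h
  rw [cc, cc, h']
lemma cc_cl (x : X) (r : ℝ) : P.cc x (cl r) = P.cc x r := P.cc_eq_of_cl x (cl_idem r)
lemma bP_cl (x : X) (r : ℝ) : P.bP x (cl r) = P.bP x r := by
  rw [bP, bP, hY, hY, clI_cl]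


-- ### building blocks for the corrected deformation ###

def G2 (x : X) (al be : ℝ) : Y :=
  if al ≤ 1/2 then P.hY (P.aP x (1 - 2*al)) be else P.hY (P.bP x (2*al - 1)) be

@[fun_prop] lemma cont_G2 : Continuous fun p : X × ℝ × ℝ => P.G2 p.1 p.2.1 p.2.2 := by
  unfold G2
  apply Continuous.if_le (by fun_prop) (by fun_prop) (by fun_prop) continuous_const
  intro p hp
  rw [hp]
  norm_num
  rw [P.aP_nonpos _ le_rfl, P.bP_nonpos _ le_rfl]

lemma G2_zz (x : X) : P.G2 x 0 0 = P.f (P.g (P.f x)) := by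
  rw [G2, if_pos (by norm_num)]
  norm_num [P.hY_nonpos _ le_rfl, P.aP_ge_one _ le_rfl]

lemma G2_zo (x : X) : P.G2 x 0 1 = P.f x := by
  rw [G2, if_pos (by norm_num)]
  norm_num [P.hY_ge_one _ le_rfl, P.aP_ge_one _ le_rfl]

end Pack

def SA (u : ℝ) : ℝ :=
  if cl u ≤ 1/2 then cl u else if cl u ≤ 5/8 then 4*cl u - 3/2
    else if cl u ≤ 3/4 then 1 else 4 - 4*cl u

def SB (u : ℝ) : ℝ :=
  if cl u ≤ 5/8 then 0 else if cl u ≤ 3/4 then 8*cl u - 5 else 1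

@[fun_prop] lemma cont_SA : Continuous SA := by
  unfold SA
  apply Continuous.if_le (by fun_prop) ?_ continuous_cl continuous_const ?_
  · apply Continuous.if_le (by fun_prop) ?_ continuous_cl continuous_const ?_
    · apply Continuous.if_le (by fun_prop) (by fun_prop) continuous_cl continuous_const ?_
      intro x h; rw [h]; norm_num
    · intro x h; rw [h]; norm_num
  · intro x h; rw [h]; norm_num

@[fun_prop] lemma cont_SB : Continuous SB := by
  unfold SB
  apply Continuous.if_le (by fun_prop) ?_ continuous_cl continuous_const ?_
  · apply Continuous.if_le (by fun_prop) (by fun_prop) continuous_cl continuous_const ?_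
    intro x h; rw [h]; norm_num
  · intro x h; rw [h]; norm_num

def pA (t : ℝ) : ℝ := if t ≤ 1/4 then 0 else if t ≤ 5/8 then (8*t-2)/3 else 1
def pB (t : ℝ) : ℝ := if t ≤ 1/4 then 1 - 4*t else if t ≤ 5/8 then 0 else (8*t-5)/3

@[fun_prop] lemma cont_pA : Continuous pA := by
  unfold pA
  apply Continuous.if_le continuous_const ?_ continuous_id continuous_const ?_
  · apply Continuous.if_le (by fun_prop) continuous_const continuous_id continuous_const ?_
    intro x h; simp only [id_eq] at h; subst h; norm_num
  · intro x h; simp only [id_eq] at h; subst h; norm_num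

@[fun_prop] lemma cont_pB : Continuous pB := by
  unfold pB
  apply Continuous.if_le (by fun_prop) ?_ continuous_id continuous_const ?_
  · apply Continuous.if_le continuous_const (by fun_prop) continuous_id continuous_const ?_
    intro x h; simp only [id_eq] at h; subst h; norm_num
  · intro x h; simp only [id_eq] at h; subst h; norm_num

namespace Pack

variable {X Y : Type*} [TopologicalSpace X] [TopologicalSpace Y] (P : Pack X Y)

def IIIa (x : X) (u s : ℝ) : Y :=
  P.G2 x (cl s * SA u) ((1 - cl s) * cl u + cl s * SB u)

@[fun_prop] lemma cont_IIIa : Continuous fun p : X × ℝ × ℝ => P.IIIa p.1 p.2.1 p.2.2 := by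
  unfold IIIa; fun_prop

def IIIb (x : X) (u s : ℝ) : Y :=
  if cl u ≤ 1/2 then P.f (P.g (P.aP x (1 - 2*cl u)))
  else if cl u ≤ 5/8 then P.f (P.g (P.bP x (8*cl u - 4)))
  else if cl u ≤ 7/8 then P.bP x ((1 - cl s) * (1 - |8*cl u - 6|))
  else P.aP x (8*cl u - 7)

@[fun_prop] lemma cont_IIIb : Continuous fun p : X × ℝ × ℝ => P.IIIb p.1 p.2.1 p.2.2 := by
  unfold IIIb
  apply Continuous.if_le (by fun_prop) ?_ (by fun_prop) continuous_const ?_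
  · apply Continuous.if_le (by fun_prop) ?_ (by fun_prop) continuous_const ?_
    · apply Continuous.if_le (by fun_prop) (by fun_prop) (by fun_prop) continuous_const ?_
      intro p h; rw [h]
      norm_num
      rw [P.bP_nonpos _ le_rfl, P.aP_nonpos _ le_rfl]
    · intro p h; rw [h]
      norm_num
      rw [P.bP_ge_one _ le_rfl, P.bP_nonpos _ le_rfl]
  · intro p h; rw [h]
    norm_num
    rw [P.aP_nonpos _ le_rfl, P.bP_nonpos _ le_rfl]

def kk (x : X) (u : ℝ) : X :=
  if cl u ≤ 1/2 then P.g (P.aP x (1 - 2*cl u))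
  else if cl u ≤ 5/8 then P.g (P.bP x (8*cl u - 4))
  else if cl u ≤ 7/8 then P.g (P.f x)
  else P.kX x (8*cl u - 7)

@[fun_prop] lemma cont_kk : Continuous fun p : X × ℝ => P.kk p.1 p.2 := by
  unfold kk
  apply Continuous.if_le (by fun_prop) ?_ (by fun_prop) continuous_const ?_
  · apply Continuous.if_le (by fun_prop) ?_ (by fun_prop) continuous_const ?_
    · apply Continuous.if_le (by fun_prop) (by fun_prop) (by fun_prop) continuous_const ?_
      intro p h; rw [h]
      norm_num
      rw [P.kX_nonpos _ le_rfl]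
    · intro p h; rw [h]
      norm_num
      rw [P.bP_ge_one _ le_rfl]
  · intro p h; rw [h]
    norm_num
    rw [P.aP_nonpos _ le_rfl, P.bP_nonpos _ le_rfl]

lemma kk_nonpos (x : X) {u : ℝ} (h : u ≤ 0) : P.kk x u = P.g (P.f x) := by
  rw [kk, cl_of_nonpos h, if_pos (by norm_num)]
  norm_num [P.aP_ge_one _ le_rfl]

lemma kk_ge_one (x : X) {u : ℝ} (h : 1 ≤ u) : P.kk x u = x := by
  rw [kk, cl_of_ge_one h, if_neg (by norm_num), if_neg (by norm_num), if_neg (by norm_num)]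
  norm_num [P.kX_ge_one _ le_rfl]

lemma IIIa_of_nonpos (x : X) {u : ℝ} (h : u ≤ 0) (s : ℝ) :
    P.IIIa x u s = P.f (P.g (P.f x)) := by
  rw [IIIa, SA, SB, cl_of_nonpos h, if_pos (by norm_num), if_pos (by norm_num)]
  norm_num
  exact P.G2_zz x

lemma IIIa_of_ge_one (x : X) {u : ℝ} (h : 1 ≤ u) (s : ℝ) : P.IIIa x u s = P.f x := by
  rw [IIIa, SA, SB, cl_of_ge_one h, if_neg (by norm_num), if_neg (by norm_num),
    if_neg (by norm_num), if_neg (by norm_num), if_neg (by norm_num)]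
  have e1 : cl s * (4 - 4*1) = 0 := by ring
  have e2 : (1 - cl s) * 1 + cl s * 1 = 1 := by ring
  rw [e1, e2]
  exact P.G2_zo x

lemma IIIb_of_nonpos (x : X) {u : ℝ} (h : u ≤ 0) (s : ℝ) :
    P.IIIb x u s = P.f (P.g (P.f x)) := by
  rw [IIIb, cl_of_nonpos h, if_pos (by norm_num)]
  norm_num [P.aP_ge_one _ le_rfl]

lemma IIIb_of_ge_one (x : X) {u : ℝ} (h : 1 ≤ u) (s : ℝ) : P.IIIb x u s = P.f x := by
  rw [IIIb, cl_of_ge_one h, if_neg (by norm_num), if_neg (by norm_num), if_neg (by norm_num)]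
  norm_num [P.aP_ge_one _ le_rfl]

/-- The key coherence junction: stage IIIa at time 1 equals stage IIIb at time 0. -/
lemma IIIab (x : X) (u : ℝ) : P.IIIa x u 1 = P.IIIb x u 0 := by
  have hu0 := cl_nonneg u
  have hu1 := cl_le_one u
  rw [IIIa, IIIb, cl_one, cl_zero]
  by_cases h1 : cl u ≤ 1/2
  · have hSA : SA u = cl u := by rw [SA, if_pos h1]
    have hSB : SB u = 0 := by rw [SB, if_pos (by linarith)]
    rw [hSA, hSB]
    have e1 : (1:ℝ) * cl u = cl u := by ring
    have e2 : (1 - (1:ℝ)) * cl u + 1 * 0 = 0 := by ring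
    rw [e1, e2, G2, if_pos h1, if_pos h1]
    exact P.hY_nonpos _ le_rfl
  · by_cases h2 : cl u ≤ 5/8
    · have hSA : SA u = 4*cl u - 3/2 := by rw [SA, if_neg h1, if_pos h2]
      have hSB : SB u = 0 := by rw [SB, if_pos h2]
      rw [hSA, hSB]
      have e1 : (1:ℝ) * (4*cl u - 3/2) = 4*cl u - 3/2 := by ring
      have e2 : (1 - (1:ℝ)) * cl u + 1 * 0 = 0 := by ring
      rw [e1, e2, G2, if_neg (by intro hc; exact h1 (by linarith))]
      have e3 : 2 * (4*cl u - 3/2) - 1 = 8*cl u - 4 := by ring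
      rw [e3, if_neg h1, if_pos h2]
      exact P.hY_nonpos _ le_rfl
    · by_cases h3 : cl u ≤ 3/4
      · have hSA : SA u = 1 := by rw [SA, if_neg h1, if_neg h2, if_pos h3]
        have hSB : SB u = 8*cl u - 5 := by rw [SB, if_neg h2, if_pos h3]
        rw [hSA, hSB]
        have e1 : (1:ℝ) * 1 = 1 := by ring
        have e2 : (1 - (1:ℝ)) * cl u + 1 * (8*cl u - 5) = 8*cl u - 5 := by ring
        rw [e1, e2, G2, if_neg (by norm_num)]
        have e3 : (2:ℝ) * 1 - 1 = 1 := by ring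
        rw [e3, P.bP_ge_one _ le_rfl, if_neg h1, if_neg h2, if_pos (by linarith)]
        have e4 : |8 * cl u - 6| = 6 - 8 * cl u := by
          rw [abs_of_nonpos (by linarith)]; ring
        have e5 : (1 - (0:ℝ)) * (1 - (6 - 8 * cl u)) = 8 * cl u - 5 := by ring
        rw [e4, e5]
        rfl
      · by_cases h4 : cl u ≤ 7/8
        · -- 3/4 < cl u ≤ 7/8
          have hSA : SA u = 4 - 4*cl u := by rw [SA, if_neg h1, if_neg h2, if_neg h3]
          have hSB : SB u = 1 := by rw [SB, if_neg h2, if_neg h3]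
          rw [hSA, hSB]
          have e1 : (1:ℝ) * (4 - 4*cl u) = 4 - 4*cl u := by ring
          have e2 : (1 - (1:ℝ)) * cl u + 1 * 1 = 1 := by ring
          rw [e1, e2, if_neg h1, if_neg h2, if_pos h4]
          have e4 : |8 * cl u - 6| = 8 * cl u - 6 := abs_of_nonneg (by linarith)
          have e5 : (1 - (0:ℝ)) * (1 - (8 * cl u - 6)) = 7 - 8 * cl u := by ring
          rw [e4, e5]
          by_cases h5 : cl u < 7/8
          · rw [G2, if_neg (by intro hc; nlinarith)]
            have e3 : 2 * (4 - 4*cl u) - 1 = 7 - 8*cl u := by ring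
            rw [e3, P.hY_ge_one _ le_rfl]
          · have h6 : cl u = 7/8 := le_antisymm h4 (not_lt.mp h5)
            rw [h6, G2]
            norm_num
            rw [P.hY_ge_one _ le_rfl, P.aP_nonpos _ le_rfl, P.bP_nonpos _ le_rfl]
        · -- 7/8 < cl u
          have hSA : SA u = 4 - 4*cl u := by rw [SA, if_neg h1, if_neg h2, if_neg h3]
          have hSB : SB u = 1 := by rw [SB, if_neg h2, if_neg h3]
          rw [hSA, hSB]
          have e1 : (1:ℝ) * (4 - 4*cl u) = 4 - 4*cl u := by ring
          have e2 : (1 - (1:ℝ)) * cl u + 1 * 1 = 1 := by ring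
          rw [e1, e2, G2, if_pos (by push_neg at h4; linarith)]
          have e3 : 1 - 2 * (4 - 4*cl u) = 8*cl u - 7 := by ring
          rw [e3, P.hY_ge_one _ le_rfl, if_neg h1, if_neg h2, if_neg h4]

/-- Stage IIIb at time 1 is `f ∘ kk`. -/
lemma IIIb_one (x : X) (u : ℝ) : P.IIIb x u 1 = P.f (P.kk x u) := by
  rw [IIIb, kk, cl_one]
  by_cases h1 : cl u ≤ 1/2
  · rw [if_pos h1, if_pos h1]
  · by_cases h2 : cl u ≤ 5/8
    · rw [if_neg h1, if_pos h2, if_neg h1, if_pos h2]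
    · by_cases h3 : cl u ≤ 7/8
      · rw [if_neg h1, if_neg h2, if_pos h3, if_neg h1, if_neg h2, if_pos h3]
        have e : (1 - (1:ℝ)) * (1 - |8 * cl u - 6|) = 0 := by ring
        rw [e]
        exact P.bP_nonpos _ le_rfl
      · rw [if_neg h1, if_neg h2, if_neg h3, if_neg h1, if_neg h2, if_neg h3]
        rfl

lemma IIIa_zero (x : X) (u : ℝ) : P.IIIa x u 0 = P.bP x u := by
  rw [IIIa, cl_zero,
    show (0:ℝ) * SA u = 0 from by ring,
    show (1 - (0:ℝ)) * cl u + 0 * SB u = cl u from by ring,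
    G2, if_pos (by norm_num), show (1:ℝ) - 2*0 = 1 from by norm_num,
    P.aP_ge_one _ le_rfl]
  exact P.bP_cl x u

-- ### the five stages of the deformation ###

def P1 (x : X) (t : ℝ) : Cyl P.f :=
  if cl t ≤ 1/2 then P.yy (P.bP x (2*cl t)) else P.cc x (2*cl t - 1)

@[fun_prop] lemma cont_P1 : Continuous fun p : X × ℝ => P.P1 p.1 p.2 := by
  unfold P1
  apply Continuous.if_le (by fun_prop) (by fun_prop) (by fun_prop) continuous_const
  intro p h; rw [h]
  norm_num
  rw [P.bP_ge_one _ le_rfl]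
  exact (P.cc_nonpos _ le_rfl).symm

def SI (x : X) (t s : ℝ) : Cyl P.f :=
  if cl t ≤ cl s/2 then P.yy (P.bP x (1 - cl s + 2*cl t))
  else P.cc x ((2*cl t - cl s)/(2 - cl s))

@[fun_prop] lemma cont_SI : Continuous fun q : (X × ℝ) × ℝ => P.SI q.1.1 q.1.2 q.2 := by
  unfold SI
  apply Continuous.if_le (by fun_prop) ?_ (by fun_prop) (by fun_prop) ?_
  · refine P.cont_cc.comp ((continuous_fst.comp continuous_fst).prodMk
      (Continuous.div (by fun_prop) (by fun_prop) fun q => ?_))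
    have := cl_le_one q.2
    exact ne_of_gt (by linarith)
  · intro q h; rw [h]
    have e1 : 1 - cl q.2 + 2 * (cl q.2 / 2) = 1 := by ring
    have e2 : (2 * (cl q.2 / 2) - cl q.2) / (2 - cl q.2) = 0 := by
      rw [show 2 * (cl q.2 / 2) - cl q.2 = 0 from by ring, zero_div]
    rw [e1, e2, P.bP_ge_one _ le_rfl]
    exact (P.cc_nonpos _ le_rfl).symm

def SII (x : X) (t s : ℝ) : Cyl P.f :=
  if cl t ≤ cl s/4 then P.cc (P.g (P.f x)) (cl s - 4*cl t)
  else P.P1 x ((4*cl t - cl s)/(4 - cl s))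

@[fun_prop] lemma cont_SII : Continuous fun q : (X × ℝ) × ℝ => P.SII q.1.1 q.1.2 q.2 := by
  unfold SII
  apply Continuous.if_le (by fun_prop) ?_ (by fun_prop) (by fun_prop) ?_
  · refine P.cont_P1.comp ((continuous_fst.comp continuous_fst).prodMk
      (Continuous.div (by fun_prop) (by fun_prop) fun q => ?_))
    have := cl_le_one q.2
    exact ne_of_gt (by linarith)
  · intro q h; rw [h]
    have e1 : cl q.2 - 4 * (cl q.2 / 4) = 0 := by ring
    have e2 : (4 * (cl q.2 / 4) - cl q.2) / (4 - cl q.2) = 0 := by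
      rw [show 4 * (cl q.2 / 4) - cl q.2 = 0 from by ring, zero_div]
    rw [e1, e2, P.cc_nonpos _ le_rfl, P1, cl_zero, if_pos (by norm_num)]
    rw [show (2:ℝ) * 0 = 0 from by ring, P.bP_nonpos _ le_rfl]

def SIIIa (x : X) (t s : ℝ) : Cyl P.f :=
  if cl t ≤ 1/4 then P.cc (P.g (P.f x)) (1 - 4*cl t)
  else if cl t ≤ 5/8 then P.yy (P.IIIa x ((8*cl t - 2)/3) s)
  else P.cc x ((8*cl t - 5)/3)

@[fun_prop] lemma cont_SIIIa : Continuous fun q : (X × ℝ) × ℝ => P.SIIIa q.1.1 q.1.2 q.2 := by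
  unfold SIIIa
  apply Continuous.if_le (by fun_prop) ?_ (by fun_prop) continuous_const ?_
  · apply Continuous.if_le (by fun_prop) (by fun_prop) (by fun_prop) continuous_const ?_
    intro q h; rw [h]
    rw [show ((8:ℝ) * (5/8) - 5)/3 = 0 from by norm_num,
      show ((8:ℝ) * (5/8) - 2)/3 = 1 from by norm_num,
      P.IIIa_of_ge_one _ le_rfl]
    exact (P.cc_nonpos _ le_rfl).symm
  · intro q h; rw [h]
    rw [show (1:ℝ) - 4 * (1/4) = 0 from by norm_num,
      show ((8:ℝ) * (1/4) - 2)/3 = 0 from by norm_num, if_pos (by norm_num),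
      P.IIIa_of_nonpos _ le_rfl, P.cc_nonpos _ le_rfl]

def SIIIb (x : X) (t s : ℝ) : Cyl P.f :=
  if cl t ≤ 1/4 then P.cc (P.g (P.f x)) (1 - 4*cl t)
  else if cl t ≤ 5/8 then P.yy (P.IIIb x ((8*cl t - 2)/3) s)
  else P.cc x ((8*cl t - 5)/3)

@[fun_prop] lemma cont_SIIIb : Continuous fun q : (X × ℝ) × ℝ => P.SIIIb q.1.1 q.1.2 q.2 := by
  unfold SIIIb
  apply Continuous.if_le (by fun_prop) ?_ (by fun_prop) continuous_const ?_
  · apply Continuous.if_le (by fun_prop) (by fun_prop) (by fun_prop) continuous_const ?_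
    intro q h; rw [h]
    rw [show ((8:ℝ) * (5/8) - 5)/3 = 0 from by norm_num,
      show ((8:ℝ) * (5/8) - 2)/3 = 1 from by norm_num,
      P.IIIb_of_ge_one _ le_rfl]
    exact (P.cc_nonpos _ le_rfl).symm
  · intro q h; rw [h]
    rw [show (1:ℝ) - 4 * (1/4) = 0 from by norm_num,
      show ((8:ℝ) * (1/4) - 2)/3 = 0 from by norm_num, if_pos (by norm_num),
      P.IIIb_of_nonpos _ le_rfl, P.cc_nonpos _ le_rfl]

def SIV (x : X) (t s : ℝ) : Cyl P.f :=
  P.cc (P.kk x ((1 - cl s) * pA (cl t) + cl s * cl t)) ((1 - cl s) * pB (cl t) + cl s)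

@[fun_prop] lemma cont_SIV : Continuous fun q : (X × ℝ) × ℝ => P.SIV q.1.1 q.1.2 q.2 := by
  unfold SIV; fun_prop

-- ### junctions between the stages ###

lemma J1 (x : X) (t : ℝ) : P.SI x t 1 = P.SII x t 0 := by
  rw [SI, SII, cl_one, cl_zero]
  by_cases h0 : cl t ≤ (0:ℝ)/4
  · have hct : cl t = 0 := le_antisymm (by simpa using h0) (cl_nonneg t)
    rw [hct, if_pos (by norm_num), if_pos (by norm_num)]
    rw [show (1:ℝ) - 1 + 2*0 = 0 from by norm_num, show (0:ℝ) - 4*0 = 0 from by norm_num,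
      P.bP_nonpos _ le_rfl, P.cc_nonpos _ le_rfl]
  · rw [if_neg h0]
    have e : (4*cl t - 0)/(4 - 0) = cl t := by field_simp; ring
    rw [e, P1, cl_idem]
    by_cases h : cl t ≤ 1/2
    · rw [if_pos (by linarith : cl t ≤ 1/2), if_pos h,
        show (1:ℝ) - 1 + 2*cl t = 2*cl t from by ring]
    · rw [if_neg h, if_neg h, show ((2:ℝ) - 1) = 1 from by norm_num, div_one]

lemma J2 (x : X) (t : ℝ) : P.SII x t 1 = P.SIIIa x t 0 := by
  rw [SII, SIIIa, cl_one]
  by_cases h1 : cl t ≤ 1/4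
  · rw [if_pos (show cl t ≤ 1/4 from h1), if_pos h1]
  · rw [if_neg ?hn, if_neg h1]
    case hn => simpa using h1
    have hge : (0:ℝ) ≤ (4*cl t - 1)/3 := by
      apply div_nonneg _ (by norm_num)
      push_neg at h1; linarith
    have hle : (4*cl t - 1)/3 ≤ 1 := by
      rw [div_le_one (by norm_num)]
      have := cl_le_one t; linarith
    rw [show (4:ℝ) - 1 = 3 from by norm_num, P1, cl_of_mem hge hle]
    by_cases h2 : cl t ≤ 5/8
    · rw [if_pos (by rw [div_le_iff₀ (by norm_num : (0:ℝ) < 3)]; linarith), if_pos h2,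
        P.IIIa_zero, show 2 * ((4*cl t - 1)/3) = (8*cl t - 2)/3 from by ring]
    · rw [if_neg (by rw [not_le, lt_div_iff₀ (by norm_num : (0:ℝ) < 3)]; push_neg at h2; linarith),
        if_neg h2, show 2 * ((4*cl t - 1)/3) - 1 = (8*cl t - 5)/3 from by ring]

lemma J3 (x : X) (t : ℝ) : P.SIIIa x t 1 = P.SIIIb x t 0 := by
  rw [SIIIa, SIIIb]
  by_cases h1 : cl t ≤ 1/4
  · rw [if_pos h1, if_pos h1]
  · by_cases h2 : cl t ≤ 5/8
    · rw [if_neg h1, if_pos h2, if_neg h1, if_pos h2, P.IIIab]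
    · rw [if_neg h1, if_neg h2, if_neg h1, if_neg h2]

lemma J4 (x : X) (t : ℝ) : P.SIIIb x t 1 = P.SIV x t 0 := by
  rw [SIIIb, SIV, cl_zero]
  rw [show (1 - (0:ℝ)) * pA (cl t) + 0 * cl t = pA (cl t) from by ring,
    show (1 - (0:ℝ)) * pB (cl t) + 0 = pB (cl t) from by ring]
  by_cases h1 : cl t ≤ 1/4
  · rw [if_pos h1, pA, if_pos h1, pB, if_pos h1, P.kk_nonpos _ le_rfl]
  · by_cases h2 : cl t ≤ 5/8
    · rw [if_neg h1, if_pos h2, pA, if_neg h1, if_pos h2, pB, if_neg h1, if_pos h2,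
        P.IIIb_one, P.cc_nonpos _ le_rfl]
    · rw [if_neg h1, if_neg h2, pA, if_neg h1, if_neg h2, pB, if_neg h1, if_neg h2,
        P.kk_ge_one _ le_rfl]

-- ### endpoint evaluations of the stages ###

lemma SI_zero (x : X) (t : ℝ) : P.SI x t 0 = P.cc x t := by
  rw [SI, cl_zero]
  by_cases h : cl t ≤ (0:ℝ)/2
  · have hct : cl t = 0 := le_antisymm (by simpa using h) (cl_nonneg t)
    rw [if_pos h, hct, show (1:ℝ) - 0 + 2*0 = 1 from by norm_num, P.bP_ge_one _ le_rfl]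
    rw [P.cc_eq_of_cl x (show cl t = cl 0 from by rw [hct, cl_zero])]
    exact (P.cc_nonpos _ le_rfl).symm
  · rw [if_neg h, show (2*cl t - 0)/(2 - 0) = cl t from by field_simp; ring, P.cc_cl]

lemma SIV_one (x : X) (t : ℝ) : P.SIV x t 1 = P.cc (P.kk x (cl t)) 1 := by
  rw [SIV, cl_one,
    show (1 - (1:ℝ)) * pA (cl t) + 1 * cl t = cl t from by ring,
    show (1 - (1:ℝ)) * pB (cl t) + 1 = 1 from by ring]

lemma SI_t1 (x : X) (s : ℝ) : P.SI x 1 s = P.cc x 1 := by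
  have hs := cl_le_one s
  rw [SI, cl_one, if_neg (by intro hc; linarith),
    show (2:ℝ)*1 - cl s = 2 - cl s from by ring,
    div_self (ne_of_gt (by linarith : (0:ℝ) < 2 - cl s))]

lemma SII_t1 (x : X) (s : ℝ) : P.SII x 1 s = P.cc x 1 := by
  have hs := cl_le_one s
  rw [SII, cl_one, if_neg (by intro hc; linarith),
    show (4:ℝ)*1 - cl s = 4 - cl s from by ring,
    div_self (ne_of_gt (by linarith : (0:ℝ) < 4 - cl s)), P1, cl_one,
    if_neg (by norm_num), show (2:ℝ)*1 - 1 = 1 from by norm_num]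

lemma SIIIa_t1 (x : X) (s : ℝ) : P.SIIIa x 1 s = P.cc x 1 := by
  rw [SIIIa, cl_one, if_neg (by norm_num), if_neg (by norm_num),
    show ((8:ℝ)*1 - 5)/3 = 1 from by norm_num]

lemma SIIIb_t1 (x : X) (s : ℝ) : P.SIIIb x 1 s = P.cc x 1 := by
  rw [SIIIb, cl_one, if_neg (by norm_num), if_neg (by norm_num),
    show ((8:ℝ)*1 - 5)/3 = 1 from by norm_num]

lemma SIV_t1 (x : X) (s : ℝ) : P.SIV x 1 s = P.cc x 1 := by
  rw [SIV, cl_one, pA, pB, if_neg (by norm_num), if_neg (by norm_num),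
    if_neg (by norm_num), if_neg (by norm_num),
    show ((8:ℝ)*1 - 5)/3 = 1 from by norm_num,
    show (1 - cl s) * 1 + cl s * 1 = 1 from by ring,
    show (1 - cl s) * 1 + cl s = 1 from by ring, P.kk_ge_one _ le_rfl]

lemma SI_t0 (x : X) (s : ℝ) : P.SI x 0 s = P.yy (P.hY (P.f x) (1 - cl s)) := by
  have h0 := cl_nonneg s
  rw [SI, cl_zero, if_pos (by linarith),
    show 1 - cl s + 2*(0:ℝ) = 1 - cl s from by ring]
  rfl

lemma SII_t0 (x : X) (s : ℝ) : P.SII x 0 s = P.cc (P.g (P.f x)) (cl s) := by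
  have h0 := cl_nonneg s
  rw [SII, cl_zero, if_pos (by linarith), show cl s - 4*(0:ℝ) = cl s from by ring]

lemma SIIIa_t0 (x : X) (s : ℝ) : P.SIIIa x 0 s = P.cc (P.g (P.f x)) 1 := by
  rw [SIIIa, cl_zero, if_pos (by norm_num), show (1:ℝ) - 4*0 = 1 from by norm_num]

lemma SIIIb_t0 (x : X) (s : ℝ) : P.SIIIb x 0 s = P.cc (P.g (P.f x)) 1 := by
  rw [SIIIb, cl_zero, if_pos (by norm_num), show (1:ℝ) - 4*0 = 1 from by norm_num]

lemma SIV_t0 (x : X) (s : ℝ) : P.SIV x 0 s = P.cc (P.g (P.f x)) 1 := by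
  rw [SIV, cl_zero, pA, pB, if_pos (by norm_num), if_pos (by norm_num),
    show (1 - cl s) * 0 + cl s * 0 = 0 from by ring,
    show (1 - cl s) * (1 - 4*0) + cl s = 1 from by ring, P.kk_nonpos _ le_rfl]

end Pack

/-- concatenation of two homotopies in the time variable -/
def ccT {α β : Type*} (F G : α → ℝ → β) (a : α) (s : ℝ) : β :=
  if s ≤ 1/2 then F a (2*s) else G a (2*s - 1)

lemma ccT_zero {α β : Type*} (F G : α → ℝ → β) (a : α) : ccT F G a 0 = F a 0 := by
  rw [ccT, if_pos (by norm_num), show (2:ℝ)*0 = 0 from by norm_num]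

lemma ccT_one {α β : Type*} (F G : α → ℝ → β) (a : α) : ccT F G a 1 = G a 1 := by
  rw [ccT, if_neg (by norm_num), show (2:ℝ)*1 - 1 = 1 from by norm_num]

lemma ccT_cont {α β : Type*} [TopologicalSpace α] [TopologicalSpace β] {F G : α → ℝ → β}
    (hF : Continuous fun p : α × ℝ => F p.1 p.2) (hG : Continuous fun p : α × ℝ => G p.1 p.2)
    (hj : ∀ a, F a 1 = G a 0) :
    Continuous fun p : α × ℝ => ccT F G p.1 p.2 := by
  unfold ccT
  apply Continuous.if_le
    (hF.comp (continuous_fst.prodMk (continuous_const.mul continuous_snd)))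
    (hG.comp (continuous_fst.prodMk ((continuous_const.mul continuous_snd).sub continuous_const)))
    continuous_snd continuous_const
  intro p hp
  show F p.1 (2*p.2) = G p.1 (2*p.2 - 1)
  rw [hp, show (2:ℝ)*(1/2) = 1 from by norm_num, show (1:ℝ) - 1 = 0 from by norm_num]
  exact hj p.1

namespace Pack

variable {X Y : Type*} [TopologicalSpace X] [TopologicalSpace Y] (P : Pack X Y)

/-- The full deformation on the cylinder part. -/
def Gam : X × ℝ → ℝ → Cyl P.f :=
  ccT (fun p s => P.SI p.1 p.2 s)
    (ccT (fun p s => P.SII p.1 p.2 s)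
      (ccT (fun p s => P.SIIIa p.1 p.2 s)
        (ccT (fun p s => P.SIIIb p.1 p.2 s)
          (fun p s => P.SIV p.1 p.2 s))))

lemma cont_Gam : Continuous fun q : (X × ℝ) × ℝ => P.Gam q.1 q.2 := by
  unfold Gam
  exact ccT_cont P.cont_SI
    (ccT_cont P.cont_SII
      (ccT_cont P.cont_SIIIa
        (ccT_cont P.cont_SIIIb P.cont_SIV (fun p => P.J4 p.1 p.2))
        (fun p => by rw [ccT_zero]; exact P.J3 p.1 p.2))
      (fun p => by rw [ccT_zero]; exact P.J2 p.1 p.2))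
    (fun p => by rw [ccT_zero]; exact P.J1 p.1 p.2)

/-- The full deformation on the base part. -/
def YI (y : Y) (s : ℝ) : Cyl P.f := P.yy (P.hY y (1 - cl s))
def YII (y : Y) (s : ℝ) : Cyl P.f := P.cc (P.g y) (cl s)
def YL (y : Y) (s : ℝ) : Cyl P.f := P.cc (P.g y) 1

@[fun_prop] lemma cont_YI : Continuous fun p : Y × ℝ => P.YI p.1 p.2 := by
  unfold YI; fun_prop
@[fun_prop] lemma cont_YII : Continuous fun p : Y × ℝ => P.YII p.1 p.2 := by
  unfold YII; fun_prop
@[fun_prop] lemma cont_YL : Continuous fun p : Y × ℝ => P.YL p.1 p.2 := by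
  unfold YL; fun_prop

def GamY : Y → ℝ → Cyl P.f := ccT P.YI (ccT P.YII (ccT P.YL (ccT P.YL P.YL)))

lemma JY1 (y : Y) : P.YI y 1 = P.YII y 0 := by
  rw [YI, YII, cl_one, cl_zero, show (1:ℝ) - 1 = 0 from by norm_num, P.hY_nonpos _ le_rfl]
  exact (P.cc_nonpos _ le_rfl).symm

lemma JY2 (y : Y) : P.YII y 1 = P.YL y 0 := by rw [YII, YL, cl_one]

lemma cont_GamY : Continuous fun q : Y × ℝ => P.GamY q.1 q.2 := by
  unfold GamY
  exact ccT_cont P.cont_YI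
    (ccT_cont P.cont_YII
      (ccT_cont P.cont_YL
        (ccT_cont P.cont_YL P.cont_YL (fun y => rfl))
        (fun y => by rw [ccT_zero]; rfl))
      (fun y => by rw [ccT_zero]; exact P.JY2 y))
    (fun y => by rw [ccT_zero]; exact P.JY1 y)

-- ### global endpoint lemmas ###

lemma Gam_zero (x : X) (t : ℝ) : P.Gam (x, t) 0 = P.cc x t := by
  simp only [Gam, ccT_zero]
  exact P.SI_zero x t

lemma Gam_one (x : X) (t : ℝ) : P.Gam (x, t) 1 = P.cc (P.kk x (cl t)) 1 := by
  simp only [Gam, ccT_one]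
  exact P.SIV_one x t

lemma Gam_t1 (x : X) (s : ℝ) : P.Gam (x, (1:ℝ)) s = P.cc x 1 := by
  simp only [Gam, ccT]
  split_ifs <;>
    first
      | exact P.SI_t1 _ _
      | exact P.SII_t1 _ _
      | exact P.SIIIa_t1 _ _
      | exact P.SIIIb_t1 _ _
      | exact P.SIV_t1 _ _

lemma GamY_zero (y : Y) : P.GamY y 0 = P.yy y := by
  simp only [GamY, ccT_zero]
  rw [YI, cl_zero, show (1:ℝ) - 0 = 1 from by norm_num, P.hY_ge_one _ le_rfl]

lemma GamY_one (y : Y) : P.GamY y 1 = P.cc (P.g y) 1 := by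
  simp only [GamY, ccT_one]
  rfl

lemma Gam_wd (x : X) (s : ℝ) : P.Gam (x, (0:ℝ)) s = P.GamY (P.f x) s := by
  simp only [Gam, GamY, ccT]
  split_ifs
  · rw [P.SI_t0, YI]
  · rw [P.SII_t0, YII]
  · rw [P.SIIIa_t0, YL]
  · rw [P.SIIIb_t0, YL]
  · rw [P.SIV_t0, YL]


-- ### bundling everything into a continuous map on the cylinder ###

def bigX : C((X × I) × I, Cyl P.f) :=
  ⟨fun q => P.Gam (q.1.1, (q.1.2 : ℝ)) (q.2 : ℝ),
    P.cont_Gam.comp ((((continuous_fst.comp continuous_fst).prodMk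
      (continuous_subtype_val.comp (continuous_snd.comp continuous_fst))).prodMk
      (continuous_subtype_val.comp continuous_snd)))⟩

def bigY : C(Y × I, Cyl P.f) :=
  ⟨fun q => P.GamY q.1 (q.2 : ℝ),
    P.cont_GamY.comp (continuous_fst.prodMk (continuous_subtype_val.comp continuous_snd))⟩

def GamFun : ((X × I) ⊕ Y) → C(I, Cyl P.f) :=
  Sum.elim (fun p => P.bigX.curry p) (fun y => P.bigY.curry y)

lemma GamFun_compat : ∀ a b, cylRel P.f a b → P.GamFun a = P.GamFun b := by
  rintro _ _ ⟨x, rfl, rfl⟩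
  ext s
  show P.Gam (x, ((0:I):ℝ)) ↑s = P.GamY (P.f x) ↑s
  rw [show ((0:I):ℝ) = (0:ℝ) from by norm_num]
  exact P.Gam_wd x ↑s

def GamLift : C(Cyl P.f, C(I, Cyl P.f)) :=
  ⟨Quot.lift P.GamFun P.GamFun_compat,
    continuous_quot_lift _ (P.bigX.curry.continuous.sumElim P.bigY.curry.continuous)⟩

def GamFinal : C(Cyl P.f × I, Cyl P.f) := P.GamLift.uncurry

lemma GamFinal_inl (x : X) (t : I) (s : I) :
    P.GamFinal (Quot.mk (cylRel P.f) (Sum.inl (x, t)), s) = P.Gam (x, (t:ℝ)) (s:ℝ) := by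
  simp only [GamFinal, ContinuousMap.uncurry_apply, Function.uncurry_apply_pair, GamLift,
    ContinuousMap.coe_mk, ContinuousMap.toFun_eq_coe, Quot.lift_mk, GamFun, Sum.elim_inl,
    ContinuousMap.curry_apply, bigX]

lemma GamFinal_inr (y : Y) (s : I) :
    P.GamFinal (Quot.mk (cylRel P.f) (Sum.inr y), s) = P.GamY y (s:ℝ) := by
  simp only [GamFinal, ContinuousMap.uncurry_apply, Function.uncurry_apply_pair, GamLift,
    ContinuousMap.coe_mk, ContinuousMap.toFun_eq_coe, Quot.lift_mk, GamFun, Sum.elim_inr,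
    ContinuousMap.curry_apply, bigY]

theorem main : ∃ Γ : C(Cyl P.f × I, Cyl P.f),
    (∀ p : Cyl P.f, Γ (p, 0) = p) ∧
    (∀ p : Cyl P.f, Γ (p, 1) ∈ Set.range fun x : X => cylQ P.f (Sum.inl (x, 1))) ∧
    (∀ p ∈ Set.range fun x : X => cylQ P.f (Sum.inl (x, 1)), ∀ s : I, Γ (p, s) = p) := by
  refine ⟨P.GamFinal, ?_, ?_, ?_⟩
  · intro p
    induction p using Quot.ind with
    | mk a =>
      rcases a with ⟨x, t⟩ | y
      · rw [P.GamFinal_inl, show ((0:I):ℝ) = (0:ℝ) from by norm_num, P.Gam_zero, cc, clI_coe,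
          cylQ]
      · rw [P.GamFinal_inr, show ((0:I):ℝ) = (0:ℝ) from by norm_num, P.GamY_zero, yy, cylQ]
  · intro p
    induction p using Quot.ind with
    | mk a =>
      rcases a with ⟨x, t⟩ | y
      · refine ⟨P.kk x (cl (t : ℝ)), ?_⟩
        show cylQ P.f (Sum.inl (P.kk x (cl (t : ℝ)), 1)) = _
        rw [P.GamFinal_inl, show ((1:I):ℝ) = (1:ℝ) from by norm_num, P.Gam_one, cc,
          clI_of_ge_one le_rfl]
      · refine ⟨P.g y, ?_⟩
        show cylQ P.f (Sum.inl (P.g y, 1)) = _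
        rw [P.GamFinal_inr, show ((1:I):ℝ) = (1:ℝ) from by norm_num, P.GamY_one, cc,
          clI_of_ge_one le_rfl]
  · rintro p ⟨x, rfl⟩ s
    show P.GamFinal (cylQ P.f (Sum.inl (x, 1)), s) = cylQ P.f (Sum.inl (x, 1))
    rw [cylQ, P.GamFinal_inl, show ((1:I):ℝ) = (1:ℝ) from by norm_num, P.Gam_t1, cc,
      clI_of_ge_one le_rfl, cylQ]

end Pack

end
end CylSDR

/-- if `f` is a homotopy equivalence, the top `X̃ = q(X × {1})`
of the mapping cylinder is a *strong* deformation retract of `M_f`. -/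
theorem top_strong_deformation_retract {X Y : Type*} [TopologicalSpace X] [TopologicalSpace Y]
    (f : X → Y) (hf : Continuous f)
    (hfe : ∃ g : C(Y, X), ((⟨f, hf⟩ : C(X, Y)).comp g).Homotopic (ContinuousMap.id Y) ∧
      (g.comp ⟨f, hf⟩).Homotopic (ContinuousMap.id X)) :
    ∃ Γ : C(Cyl f × I, Cyl f),
      (∀ p : Cyl f, Γ (p, 0) = p) ∧
      (∀ p : Cyl f, Γ (p, 1) ∈ Set.range fun x : X => cylQ f (Sum.inl (x, 1))) ∧
      (∀ p ∈ Set.range fun x : X => cylQ f (Sum.inl (x, 1)), ∀ s : I, Γ (p, s) = p) := by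
  obtain ⟨g, h1, h2⟩ := hfe
  obtain ⟨H⟩ := h1
  obtain ⟨K⟩ := h2
  exact CylSDR.Pack.main ⟨f, hf, g, H, K⟩
end

section
/- If the top X̃ = q(X × {1}) of the mapping cylinder M_f of a continuous map f : X → Y is a strong deformation retract of M_f, then f is a homotopy equivalence. -/
open unitInterval

/-- Points `inl (x, t)` with `t ≠ 0` are alone in their equivalence class. -/
lemma cyl_good {X Y : Type*} (f : X → Y) :
    ∀ a b : (X × I) ⊕ Y, Relation.EqvGen (cylRel f) a b →
      ((∃ x : X, ∃ t : I, t ≠ 0 ∧ a = Sum.inl (x, t)) → a = b) ∧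
      ((∃ x : X, ∃ t : I, t ≠ 0 ∧ b = Sum.inl (x, t)) → a = b) := by
  intro a b h
  induction h with
  | rel a b hr =>
    obtain ⟨x, ha, hb⟩ := hr
    constructor
    · rintro ⟨x', t, ht, rfl⟩
      rw [Sum.inl.injEq, Prod.mk.injEq] at ha
      exact absurd ha.2 ht
    · rintro ⟨x', t, ht, rfl⟩
      exact absurd hb (by simp)
  | refl a => exact ⟨fun _ => rfl, fun _ => rfl⟩
  | symm a b h ih => exact ⟨fun h' => (ih.2 h').symm, fun h' => (ih.1 h').symm⟩
  | trans a b c h1 h2 ih1 ih2 =>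
    constructor
    · intro ha
      have hab := ih1.1 ha
      exact hab.trans (ih2.1 (hab ▸ ha))
    · intro hc
      have hbc := ih2.2 hc
      exact (ih1.2 (hbc ▸ hc)).trans hbc

lemma cylQ_good_inj {X Y : Type*} (f : X → Y) {x : X} {t : I} (ht : t ≠ 0)
    {a : (X × I) ⊕ Y} (h : cylQ f (Sum.inl (x, t)) = cylQ f a) : Sum.inl (x, t) = a :=
  (cyl_good f _ _ (Quot.eqvGen_exact h)).1 ⟨x, t, ht, rfl⟩

lemma top_isEmbedding {X Y : Type*} [TopologicalSpace X] [TopologicalSpace Y] (f : X → Y) :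
    Topology.IsEmbedding (fun x : X => cylQ f (Sum.inl (x, 1))) := by
  have hcont : Continuous (fun x : X => cylQ f (Sum.inl (x, 1))) :=
    continuous_quot_mk.comp (continuous_inl.comp (Continuous.prodMk_left 1))
  refine ⟨⟨le_antisymm (continuous_iff_le_induced.mp hcont) ?_⟩, ?_⟩
  · intro U hU
    rw [isOpen_induced_iff]
    refine ⟨cylQ f '' (Sum.inl '' (U ×ˢ {t : I | t ≠ 0})), ?_, ?_⟩
    · rw [← isQuotientMap_quot_mk.isOpen_preimage]
      have hsat : Quot.mk (cylRel f) ⁻¹' (cylQ f '' (Sum.inl '' (U ×ˢ {t : I | t ≠ 0})))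
          = Sum.inl '' (U ×ˢ {t : I | t ≠ 0}) := by
        ext a
        simp only [Set.mem_preimage, Set.mem_image]
        constructor
        · rintro ⟨b, ⟨⟨u, t⟩, ⟨hu, ht⟩, rfl⟩, hq⟩
          have ht' : t ≠ 0 := ht
          have := cylQ_good_inj f (x := u) (t := t) ht' hq
          exact ⟨(u, t), ⟨hu, ht⟩, this⟩
        · rintro ⟨p, hp, rfl⟩
          exact ⟨Sum.inl p, ⟨p, hp, rfl⟩, rfl⟩
      rw [hsat]
      exact isOpenMap_inl _ (hU.prod isOpen_compl_singleton)
    · ext x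
      simp only [Set.mem_preimage, Set.mem_image]
      constructor
      · rintro ⟨b, ⟨⟨u, t⟩, ⟨hu, ht⟩, rfl⟩, hq⟩
        have ht' : t ≠ 0 := ht
        have := cylQ_good_inj f (x := u) (t := t) ht' hq
        rw [Sum.inl.injEq, Prod.mk.injEq] at this
        exact this.1 ▸ hu
      · intro hx
        exact ⟨Sum.inl (x, 1), ⟨(x, 1), ⟨hx, one_ne_zero⟩, rfl⟩, rfl⟩
  · intro x x' h
    have := cylQ_good_inj f one_ne_zero (a := Sum.inl (x', 1)) h
    rw [Sum.inl.injEq, Prod.mk.injEq] at this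
    exact this.1

/-- The projection of the mapping cylinder to `Y`. -/
noncomputable def cylProj {X Y : Type*} [TopologicalSpace X] [TopologicalSpace Y]
    (f : X → Y) (hf : Continuous f) : C(Cyl f, Y) where
  toFun := Quot.lift (Sum.elim (fun p => f p.1) id)
    (by rintro a b ⟨x, rfl, rfl⟩; rfl)
  continuous_toFun := continuous_quot_lift _ ((hf.comp continuous_fst).sumElim continuous_id)

/-- if the top `X̃ = q(X × {1})` of the mapping cylinder of a
continuous map `f` is a strong deformation retract of `M_f`, then `f` is a
homotopy equivalence. -/
theorem homotopy_equivalence_of_top_sdr {X Y : Type*} [TopologicalSpace X] [TopologicalSpace Y]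
    (f : X → Y) (hf : Continuous f)
    (hsdr : ∃ H : C(Cyl f × I, Cyl f),
      (∀ p : Cyl f, H (p, 0) = p) ∧
      (∀ p : Cyl f, H (p, 1) ∈ Set.range fun x : X => cylQ f (Sum.inl (x, 1))) ∧
      (∀ p ∈ Set.range fun x : X => cylQ f (Sum.inl (x, 1)), ∀ s : I, H (p, s) = p)) :
    ∃ g : C(Y, X), ((⟨f, hf⟩ : C(X, Y)).comp g).Homotopic (ContinuousMap.id Y) ∧
      (g.comp ⟨f, hf⟩).Homotopic (ContinuousMap.id X) := by
  obtain ⟨H, H0, H1, Hfix⟩ := hsdr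
  set j : X → Cyl f := fun x => cylQ f (Sum.inl (x, 1)) with hj
  have hemb := top_isEmbedding f
  -- the retraction r : Cyl f → X
  have hr : ∀ p : Cyl f, ∃ x : X, j x = H (p, 1) := fun p => H1 p
  let r : Cyl f → X := fun p => (hr p).choose
  have hjr : ∀ p, j (r p) = H (p, 1) := fun p => (hr p).choose_spec
  have hrcont : Continuous r := by
    rw [hemb.continuous_iff]
    have hcomp : ((fun x : X => cylQ f (Sum.inl (x, 1))) ∘ r) = fun p => H (p, 1) :=
      funext hjr
    rw [hcomp]
    exact H.continuous.comp (continuous_id.prodMk continuous_const)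
  have hrj : ∀ x : X, r (j x) = x := by
    intro x
    apply hemb.injective
    show j (r (j x)) = j x
    rw [hjr]
    exact Hfix (j x) ⟨x, rfl⟩ 1
  let g : C(Y, X) := ⟨fun y => r (cylQ f (Sum.inr y)),
    hrcont.comp (continuous_quot_mk.comp continuous_inr)⟩
  refine ⟨g, ?_, ?_⟩
  · -- f ∘ g ≃ id Y
    let π := cylProj f hf
    have hπj : ∀ x : X, π (j x) = f x := fun x => rfl
    refine ⟨ContinuousMap.Homotopy.symm
      { toFun := fun q => π (H (cylQ f (Sum.inr q.2), q.1))
        continuous_toFun := π.continuous.comp (H.continuous.comp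
          (((continuous_quot_mk.comp continuous_inr).comp continuous_snd).prodMk
            continuous_fst))
        map_zero_left := ?_
        map_one_left := ?_ }⟩
    · intro y
      simp only [H0]
      rfl
    · intro y
      show π (H (cylQ f (Sum.inr y), 1)) = _
      rw [← hjr, hπj]
      rfl
  · -- g ∘ f ≃ id X
    refine ⟨{ toFun := fun q => r (cylQ f (Sum.inl (q.2, q.1)))
              continuous_toFun := hrcont.comp (continuous_quot_mk.comp
                (continuous_inl.comp (continuous_snd.prodMk continuous_fst)))
              map_zero_left := ?_
              map_one_left := ?_ }⟩
    · intro x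
      show r (cylQ f (Sum.inl (x, 0))) = g (f x)
      have : cylQ f (Sum.inl (x, 0)) = cylQ f (Sum.inr (f x)) :=
        Quot.sound ⟨x, rfl, rfl⟩
      rw [this]
      rfl
    · intro x
      exact hrj x
end
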